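/- Let n ≥ 1, let s = (s₁,…,sₙ) be a probability vector, and let G₁, G₂ : ℝ → [0,1] be two functions with G₁(t) ≥ G₂(t) for all t (i.e., the distribution G₁ is smaller than G₂ in the usual stochastic order). Then for every t ∈ ℝ, ∑_{i=1}^{n} s_i · (1 − E(n,i,G₁(t))) ≤ ∑_{i=1}^{n} s_i · (1 − E(n,i,G₂(t))). (This is Theorem 1, Part 2: two coherent systems with the same signature and stochastically ordered IID component distributions have stochastically ordered lifetimes.) -/

import Mathlib

/-- `E n i a = ∑_{j=i}^n C(n,j) a^j (1-a)^(n-j)`. -/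
noncomputable def E (n i : ℕ) (a : ℝ) : ℝ :=
  ∑ j ∈ Finset.Icc i n, (n.choose j : ℝ) * a ^ j * (1 - a) ^ (n - j)

lemma choose_mul_left (n j : ℕ) (hj : 1 ≤ j) (hn : 1 ≤ n) :
    (n.choose j : ℝ) * j = n * (n-1).choose (j-1) := by
  obtain ⟨m, rfl⟩ := Nat.exists_eq_add_of_le hn
  obtain ⟨k, rfl⟩ := Nat.exists_eq_add_of_le hj
  push_cast
  have := Nat.add_one_mul_choose_eq m k
  have : ((m+1) * m.choose k : ℕ) = ((m+1).choose (k+1) * (k+1) : ℕ) := this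
  have h2 : ((m+1) : ℝ) * m.choose k = (m+1).choose (k+1) * (k+1) := by exact_mod_cast this
  simp [Nat.add_sub_cancel, add_comm 1 m, add_comm 1 k]
  ring_nf
  ring_nf at h2
  linarith

lemma choose_mul_right (n j : ℕ) (hn : 1 ≤ n) :
    (n.choose j : ℝ) * (n - j : ℕ) = n * (n-1).choose j := by
  obtain ⟨m, rfl⟩ := Nat.exists_eq_add_of_le hn
  have h1 : (1+m).choose (j+1) * (j+1) = (1+m).choose j * ((1+m) - j) := Nat.choose_succ_right_eq _ _
  have h2 := Nat.add_one_mul_choose_eq m j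
  -- h2 : (m+1) * m.choose j = (m+1).choose (j+1) * (j+1)
  have : (1+m).choose j * ((1+m) - j) = (1+m) * m.choose j := by
    rw [← h1, add_comm 1 m, h2]
  have h3 : (1:ℕ)+m-1 = m := by omega
  rw [h3]
  exact_mod_cast congrArg (Nat.cast (R := ℝ)) this

lemma hasDerivAt_E (n i : ℕ) (hi : 1 ≤ i) (hin : i ≤ n) (a : ℝ) :
    HasDerivAt (E n i)
      ((n:ℝ) * (n-1).choose (i-1) * a^(i-1) * (1-a)^(n-i)) a := by
  set g : ℕ → ℝ := fun j => (n:ℝ) * (n-1).choose j * a^j * (1-a)^(n-1-j) with hg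
  have hterm : ∀ j ∈ Finset.Icc i n,
      HasDerivAt (fun a : ℝ => (n.choose j : ℝ) * a ^ j * (1 - a) ^ (n - j))
        (g (j-1) - g j) a := by
    intro j hj
    simp only [Finset.mem_Icc] at hj
    have hj1 : 1 ≤ j := le_trans hi hj.1
    have hjn : j ≤ n := hj.2
    have h1 : HasDerivAt (fun a : ℝ => a ^ j) ((j:ℝ) * a ^ (j-1)) a :=
      hasDerivAt_pow j a
    have hinner : HasDerivAt (fun a : ℝ => 1 - a) (-1 : ℝ) a := by
      simpa using (hasDerivAt_id a).const_sub 1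
    have h2 : HasDerivAt (fun a : ℝ => (1 - a) ^ (n - j))
        (((n-j : ℕ):ℝ) * (1-a) ^ (n-j-1) * (-1)) a :=
      (hasDerivAt_pow (n-j) (1-a)).comp a hinner
    have h3 := ((h1.mul h2).const_mul (n.choose j : ℝ))
    have harr : (fun a : ℝ => (n.choose j : ℝ) * (a ^ j * (1 - a) ^ (n - j)))
        = (fun a : ℝ => (n.choose j : ℝ) * a ^ j * (1 - a) ^ (n - j)) := by
      funext x; ring
    simp only [Pi.mul_apply] at h3
    rw [harr] at h3
    refine h3.congr_deriv (Eq.symm ?_)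
    have e1 : (n.choose j : ℝ) * j = n * (n-1).choose (j-1) :=
      choose_mul_left n j hj1 (le_trans hj1 hjn)
    have e2 : (n.choose j : ℝ) * ((n-j : ℕ):ℝ) = n * (n-1).choose j :=
      choose_mul_right n j (le_trans hj1 hjn)
    have exp1 : n - 1 - (j - 1) = n - j := by omega
    rcases eq_or_lt_of_le hjn with rfl | hlt
    · have hz1 : ((j - j : ℕ):ℝ) = 0 := by simp
      have hz2 : ((j-1).choose j : ℝ) = 0 := by
        rw [Nat.choose_eq_zero_of_lt (by omega)]; simp
      simp only [hg, hz1, hz2, exp1]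
      linear_combination (-(a ^ (j - 1) * (1 - a) ^ (j - j))) * e1
    · have exp2 : n - j - 1 = n - 1 - j := by omega
      simp only [hg, exp1, exp2]
      linear_combination (-(a ^ (j - 1) * (1 - a) ^ (n - j))) * e1 +
        (a ^ j * (1 - a) ^ (n - 1 - j)) * e2
  have hsum := HasDerivAt.fun_sum hterm
  have : E n i = fun a => ∑ j ∈ Finset.Icc i n,
      (n.choose j : ℝ) * a ^ j * (1 - a) ^ (n - j) := rfl
  rw [show E n i = fun a => ∑ j ∈ Finset.Icc i n,
      (n.choose j : ℝ) * a ^ j * (1 - a) ^ (n - j) from rfl]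
  refine hsum.congr_deriv (Eq.symm ?_)
  -- telescoping
  rw [← Finset.Ico_add_one_right_eq_Icc, Finset.sum_Ico_eq_sum_range]
  have : ∀ k, g (i + k - 1) - g (i + k) = g (i-1+k) - g (i-1+(k+1)) := by
    intro k; congr 2 <;> omega
  calc (n:ℝ) * (n-1).choose (i-1) * a^(i-1) * (1-a)^(n-i)
      = g (i-1) - g n := by
        have hz : ((n-1).choose n : ℝ) = 0 := by
          rw [Nat.choose_eq_zero_of_lt (by omega)]; simp
        have : n - 1 - (i - 1) = n - i := by omega
        simp [hg, hz, this]
    _ = (fun k => g (i-1+k)) 0 - (fun k => g (i-1+k)) (n+1-i) := by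
        simp only []
        congr 2 <;> omega
    _ = ∑ k ∈ Finset.range (n+1-i), ((fun k => g (i-1+k)) k - (fun k => g (i-1+k)) (k+1)) := by
        rw [Finset.sum_range_sub']
    _ = ∑ k ∈ Finset.range (n+1-i), (g (i + k - 1) - g (i + k)) := by
        apply Finset.sum_congr rfl
        intro k _
        simp only []
        congr 2 <;> omega

lemma E_monotoneOn (n i : ℕ) (hi : 1 ≤ i) (hin : i ≤ n) :
    MonotoneOn (E n i) (Set.Icc (0:ℝ) 1) := by
  have hd : ∀ a : ℝ, HasDerivAt (E n i)
      ((n:ℝ) * (n-1).choose (i-1) * a^(i-1) * (1-a)^(n-i)) a :=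
    fun a => hasDerivAt_E n i hi hin a
  have hdiff : Differentiable ℝ (E n i) := fun a => (hd a).differentiableAt
  apply monotoneOn_of_deriv_nonneg (convex_Icc 0 1) hdiff.continuous.continuousOn
    (hdiff.differentiableOn)
  intro x hx
  rw [interior_Icc, Set.mem_Ioo] at hx
  rw [(hd x).deriv]
  have h1 : (0:ℝ) ≤ x ^ (i-1) := le_of_lt (pow_pos hx.1 _)
  have h2 : (0:ℝ) ≤ (1-x) ^ (n-i) := le_of_lt (pow_pos (by linarith [hx.2]) _)
  positivity

/-- Theorem 1, Part 2: two coherent systems with the same signature and stochastically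
ordered IID component distributions (`G₁ ≥ G₂` pointwise, i.e. `G₁ ≤_st G₂`) have
stochastically ordered lifetimes. -/
theorem stmt_1 (n : ℕ) (hn : 1 ≤ n) (s : ℕ → ℝ)
    (hsnonneg : ∀ i ∈ Finset.Icc 1 n, 0 ≤ s i)
    (hssum : ∑ i ∈ Finset.Icc 1 n, s i = 1)
    (G₁ G₂ : ℝ → ℝ)
    (hG₁ : ∀ t, G₁ t ∈ Set.Icc (0 : ℝ) 1) (hG₂ : ∀ t, G₂ t ∈ Set.Icc (0 : ℝ) 1)
    (hst : ∀ t, G₂ t ≤ G₁ t) :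
    ∀ t : ℝ,
      ∑ i ∈ Finset.Icc 1 n, s i * (1 - E n i (G₁ t)) ≤
        ∑ i ∈ Finset.Icc 1 n, s i * (1 - E n i (G₂ t)) := by
  intro t
  apply Finset.sum_le_sum
  intro i hi
  have hi' := Finset.mem_Icc.mp hi
  have hE : E n i (G₂ t) ≤ E n i (G₁ t) :=
    E_monotoneOn n i hi'.1 hi'.2 (hG₂ t) (hG₁ t) (hst t)
  exact mul_le_mul_of_nonneg_left (by linarith) (hsnonneg i hi)
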